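/- Let H be a real Hilbert space with a Hilbert (orthonormal) basis (b_i), z₁,…,z_{n_z}, g₁,…,g_{n_g} ∈ H with Gram matrices Z and G, and A = [a_{kl}] ∈ ℝ^{n_z×n_g}. Then the finite-rank operator K̂ = Σ_{k,l} a_{kl} z_k ⊗ g_l satisfies Σ'_i ‖K̂ b_i‖² = ‖Z^{1/2} A G^{1/2}‖_F², i.e., the Hilbert–Schmidt norm of K̂ equals the matrix Frobenius norm of Z^{1/2} A G^{1/2}. -/

import Mathlib

open scoped InnerProductSpace ENNReal NNReal

/-- The rank-one operator `v ⊗ u : w ↦ ⟪u, w⟫ v` on a real Hilbert space. -/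
noncomputable def rankOne {H : Type*} [NormedAddCommGroup H] [InnerProductSpace ℝ H]
    (v u : H) : H →L[ℝ] H := (innerSL ℝ u).smulRight v

/-- The Gram matrix of a finite family of vectors. -/
noncomputable def gram {H : Type*} [NormedAddCommGroup H] [InnerProductSpace ℝ H]
    {n : ℕ} (u : Fin n → H) : Matrix (Fin n) (Fin n) ℝ :=
  Matrix.of fun i j => ⟪u i, u j⟫_ℝ

/-- Squared Frobenius norm of a real matrix. -/
noncomputable def frobSq {n m : ℕ} (M : Matrix (Fin n) (Fin m) ℝ) : ℝ :=
  ∑ i, ∑ j, (M i j) ^ 2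

/-- The squared Hilbert–Schmidt norm `Σ'_i ‖K̂ b_i‖²` of the finite-rank operator
`K̂ = Σ_{k,l} a_{kl} z_k ⊗ g_l` equals the squared matrix Frobenius norm of
`Z^{1/2} A G^{1/2}`, where `Zh = Z^{1/2}`, `Gh = G^{1/2}` are the PSD square
roots of the Gram matrices of `(z_k)` and `(g_l)`. -/
theorem statement12 {H : Type*} [NormedAddCommGroup H] [InnerProductSpace ℝ H]
    {ι : Type*} (b : HilbertBasis ι ℝ H)
    {nz ng : ℕ} (z : Fin nz → H) (g : Fin ng → H)
    (A : Matrix (Fin nz) (Fin ng) ℝ)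
    (Zh : Matrix (Fin nz) (Fin nz) ℝ) (hZh : Zh.PosSemidef) (hZh2 : Zh * Zh = gram z)
    (Gh : Matrix (Fin ng) (Fin ng) ℝ) (hGh : Gh.PosSemidef) (hGh2 : Gh * Gh = gram g) :
    (∑' i, ((‖(∑ k, ∑ l, A k l • rankOne (z k) (g l)) (b i)‖₊ : ℝ≥0∞)) ^ 2) =
      ENNReal.ofReal (frobSq (Zh * A * Gh)) := by
  -- the combined middle quantity
  set T : (Fin nz × Fin ng) → (Fin nz × Fin ng) → ℝ := fun p q =>
    A p.1 p.2 * A q.1 q.2 * ⟪z p.1, z q.1⟫_ℝ * ⟪g p.2, g q.2⟫_ℝ with hT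
  -- the operator applied to a vector
  have hKa : ∀ w : H, (∑ k, ∑ l, A k l • rankOne (z k) (g l)) w
      = ∑ p : Fin nz × Fin ng, (A p.1 p.2 * ⟪g p.2, w⟫_ℝ) • z p.1 := by
    intro w
    rw [Fintype.sum_prod_type]
    simp [rankOne, ContinuousLinearMap.sum_apply, mul_smul]
  -- per-index norm squared
  have hF : ∀ i : ι, ‖(∑ k, ∑ l, A k l • rankOne (z k) (g l)) (b i)‖ ^ 2
      = ∑ p : Fin nz × Fin ng, ∑ q : Fin nz × Fin ng, (A p.1 p.2 * A q.1 q.2 * ⟪z p.1, z q.1⟫_ℝ) * (⟪g p.2, b i⟫_ℝ * ⟪b i, g q.2⟫_ℝ) := by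
    intro i
    rw [← real_inner_self_eq_norm_sq, hKa]
    rw [sum_inner]
    refine Finset.sum_congr rfl fun p _ => ?_
    rw [inner_sum]
    refine Finset.sum_congr rfl fun q _ => ?_
    rw [real_inner_smul_left, real_inner_smul_right, real_inner_comm (b i) (g q.2)]
    ring
  have hsum : ∀ p q : Fin nz × Fin ng, Summable fun i : ι =>
      (A p.1 p.2 * A q.1 q.2 * ⟪z p.1, z q.1⟫_ℝ) * (⟪g p.2, b i⟫_ℝ * ⟪b i, g q.2⟫_ℝ) :=
    fun p q => (b.summable_inner_mul_inner (g p.2) (g q.2)).mul_left _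
  have hsum2 : ∀ p : Fin nz × Fin ng, Summable fun i : ι =>
      ∑ q : Fin nz × Fin ng, (A p.1 p.2 * A q.1 q.2 * ⟪z p.1, z q.1⟫_ℝ) * (⟪g p.2, b i⟫_ℝ * ⟪b i, g q.2⟫_ℝ) :=
    fun p => summable_sum fun q _ => hsum p q
  have hsum3 : Summable fun i : ι =>
      ∑ p : Fin nz × Fin ng, ∑ q : Fin nz × Fin ng, (A p.1 p.2 * A q.1 q.2 * ⟪z p.1, z q.1⟫_ℝ) * (⟪g p.2, b i⟫_ℝ * ⟪b i, g q.2⟫_ℝ) :=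
    summable_sum fun p _ => hsum2 p
  -- tsum computation
  have htsum : (∑' i : ι, ∑ p : Fin nz × Fin ng, ∑ q : Fin nz × Fin ng,
      (A p.1 p.2 * A q.1 q.2 * ⟪z p.1, z q.1⟫_ℝ) * (⟪g p.2, b i⟫_ℝ * ⟪b i, g q.2⟫_ℝ))
      = ∑ p : Fin nz × Fin ng, ∑ q : Fin nz × Fin ng, T p q := by
    rw [Summable.tsum_finsetSum fun p _ => hsum2 p]
    refine Finset.sum_congr rfl fun p _ => ?_
    rw [Summable.tsum_finsetSum fun q _ => hsum p q]
    refine Finset.sum_congr rfl fun q _ => ?_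
    rw [tsum_mul_left, b.tsum_inner_mul_inner]
  -- convert LHS
  have hL : (∑' i, ((‖(∑ k, ∑ l, A k l • rankOne (z k) (g l)) (b i)‖₊ : ℝ≥0∞)) ^ 2)
      = ENNReal.ofReal (∑ p : Fin nz × Fin ng, ∑ q : Fin nz × Fin ng, T p q) := by
    have hnn : ∀ i : ι, 0 ≤ ∑ p : Fin nz × Fin ng, ∑ q : Fin nz × Fin ng,
        (A p.1 p.2 * A q.1 q.2 * ⟪z p.1, z q.1⟫_ℝ) * (⟪g p.2, b i⟫_ℝ * ⟪b i, g q.2⟫_ℝ) := by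
      intro i; rw [← hF i]; positivity
    rw [← htsum, ENNReal.ofReal_tsum_of_nonneg hnn hsum3]
    refine tsum_congr fun i => ?_
    rw [← hF i, ENNReal.ofReal_pow (norm_nonneg _), ofReal_norm, enorm_eq_nnnorm]
  rw [hL]
  congr 1
  -- algebra part: frobSq (Zh*A*Gh) = ∑ p : Fin nz × Fin ng, ∑ q : Fin nz × Fin ng, T p q
  have hZsym : ∀ i k : Fin nz, Zh i k = Zh k i := fun i k => by simpa using hZh.1.apply k i
  have hGsym : ∀ i k : Fin ng, Gh i k = Gh k i := fun i k => by simpa using hGh.1.apply k i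
  have hentry : ∀ i j, (Zh * A * Gh) i j = ∑ p : Fin nz × Fin ng, Zh i p.1 * A p.1 p.2 * Gh p.2 j := by
    intro i j
    rw [Fintype.sum_prod_type]
    simp only [Matrix.mul_apply, Finset.sum_mul]
    rw [Finset.sum_comm]
  have hZe : ∀ k k' : Fin nz, (∑ i, Zh i k * Zh i k') = ⟪z k, z k'⟫_ℝ := by
    intro k k'
    have : (Zh * Zh) k k' = ⟪z k, z k'⟫_ℝ := by rw [hZh2]; rfl
    rw [← this, Matrix.mul_apply]
    exact Finset.sum_congr rfl fun i _ => by rw [hZsym i k]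
  have hGe : ∀ l l' : Fin ng, (∑ j, Gh l j * Gh l' j) = ⟪g l, g l'⟫_ℝ := by
    intro l l'
    have : (Gh * Gh) l l' = ⟪g l, g l'⟫_ℝ := by rw [hGh2]; rfl
    rw [← this, Matrix.mul_apply]
    exact Finset.sum_congr rfl fun j _ => by rw [hGsym l' j]
  symm
  unfold frobSq
  calc ∑ i, ∑ j, ((Zh * A * Gh) i j) ^ 2
      = ∑ i, ∑ j, ∑ p : Fin nz × Fin ng, ∑ q : Fin nz × Fin ng, (Zh i p.1 * A p.1 p.2 * Gh p.2 j) * (Zh i q.1 * A q.1 q.2 * Gh q.2 j) := by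
        refine Finset.sum_congr rfl fun i _ => Finset.sum_congr rfl fun j _ => ?_
        rw [hentry, sq, Finset.sum_mul_sum]
    _ = ∑ p : Fin nz × Fin ng, ∑ q : Fin nz × Fin ng, ∑ i, ∑ j, (Zh i p.1 * A p.1 p.2 * Gh p.2 j) * (Zh i q.1 * A q.1 q.2 * Gh q.2 j) := by
        calc ∑ i, ∑ j, ∑ p : Fin nz × Fin ng, ∑ q : Fin nz × Fin ng,
              (Zh i p.1 * A p.1 p.2 * Gh p.2 j) * (Zh i q.1 * A q.1 q.2 * Gh q.2 j)
            = ∑ i, ∑ p : Fin nz × Fin ng, ∑ j, ∑ q : Fin nz × Fin ng,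
              (Zh i p.1 * A p.1 p.2 * Gh p.2 j) * (Zh i q.1 * A q.1 q.2 * Gh q.2 j) :=
              Finset.sum_congr rfl fun i _ => Finset.sum_comm
          _ = ∑ p : Fin nz × Fin ng, ∑ i, ∑ j, ∑ q : Fin nz × Fin ng,
              (Zh i p.1 * A p.1 p.2 * Gh p.2 j) * (Zh i q.1 * A q.1 q.2 * Gh q.2 j) :=
              Finset.sum_comm
          _ = ∑ p : Fin nz × Fin ng, ∑ i, ∑ q : Fin nz × Fin ng, ∑ j,
              (Zh i p.1 * A p.1 p.2 * Gh p.2 j) * (Zh i q.1 * A q.1 q.2 * Gh q.2 j) :=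
              Finset.sum_congr rfl fun p _ => Finset.sum_congr rfl fun i _ => Finset.sum_comm
          _ = ∑ p : Fin nz × Fin ng, ∑ q : Fin nz × Fin ng, ∑ i, ∑ j,
              (Zh i p.1 * A p.1 p.2 * Gh p.2 j) * (Zh i q.1 * A q.1 q.2 * Gh q.2 j) :=
              Finset.sum_congr rfl fun p _ => Finset.sum_comm
    _ = ∑ p : Fin nz × Fin ng, ∑ q : Fin nz × Fin ng, T p q := by
        refine Finset.sum_congr rfl fun p _ => Finset.sum_congr rfl fun q _ => ?_
        have : ∀ i j, (Zh i p.1 * A p.1 p.2 * Gh p.2 j) * (Zh i q.1 * A q.1 q.2 * Gh q.2 j)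
            = (A p.1 p.2 * A q.1 q.2) * ((Zh i p.1 * Zh i q.1) * (Gh p.2 j * Gh q.2 j)) := by
          intro i j; ring
        have h2 : (A p.1 p.2 * A q.1 q.2) * ((∑ i, Zh i p.1 * Zh i q.1) * (∑ j, Gh p.2 j * Gh q.2 j))
            = ∑ i, ∑ j, (Zh i p.1 * A p.1 p.2 * Gh p.2 j) * (Zh i q.1 * A q.1 q.2 * Gh q.2 j) := by
          rw [Finset.sum_mul_sum, Finset.mul_sum]
          refine Finset.sum_congr rfl fun i _ => ?_
          rw [Finset.mul_sum]
          exact Finset.sum_congr rfl fun j _ => by ring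
        rw [← h2, hZe, hGe, hT]
        ring
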